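/- Let p₁,…,p₅ ∈ ℝ² be pairwise linearly independent nonzero vectors and let q₁,…,q₅ ∈ ℝ² be pairwise linearly independent nonzero vectors. Write [u v] for the determinant of the 2×2 matrix with columns u, v. Then there exists an invertible real 2×2 matrix H with H·pᵢ ∼ qᵢ for all i = 1,…,5 if and only if for every i ∈ {1,…,5}, writing {j₁ < j₂ < j₃ < j₄} = {1,…,5} \ {i}, one has [p_{j₁}p_{j₃}][p_{j₂}p_{j₄}][q_{j₁}q_{j₄}][q_{j₂}q_{j₃}] = [p_{j₁}p_{j₄}][p_{j₂}p_{j₃}][q_{j₁}q_{j₃}][q_{j₂}q_{j₄}]. -/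

import Mathlib

open Matrix

/-- `u ∼ v`: the vectors are equal up to a nonzero real scalar. -/
def Sim {k : ℕ} (u v : Fin k → ℝ) : Prop := ∃ c : ℝ, c ≠ 0 ∧ u = c • v

/-- Determinant of the 2×2 matrix with columns `u`, `v`. -/
def det2 (u v : Fin 2 → ℝ) : ℝ := ((Matrix.of ![u, v])ᵀ).det

/-- Lemma 25: five labeled points on ℙ¹ are projectively equivalent to another
five iff all five four-point cross-ratios of complements coincide.  For
`i : Fin 5`, the map `i.succAbove : Fin 4 → Fin 5` enumerates the complement
`{1,…,5} \ {i}` in increasing order. -/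
lemma det2_eq (u v : Fin 2 → ℝ) : det2 u v = u 0 * v 1 - u 1 * v 0 := by
  show (Matrix.of ![u, v])ᵀ.det = _; rw [Matrix.det_transpose]; simp [Matrix.det_fin_two]

lemma det2_mulVec (H : Matrix (Fin 2) (Fin 2) ℝ) (u v : Fin 2 → ℝ) :
    det2 (H.mulVec u) (H.mulVec v) = H.det * det2 u v := by
  simp [det2_eq, Matrix.mulVec, dotProduct, Fin.sum_univ_two, Matrix.det_fin_two]
  ring

lemma det2_smul_smul (a b : ℝ) (u v : Fin 2 → ℝ) :
    det2 (a • u) (b • v) = a * b * det2 u v := by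
  simp [det2_eq]; ring

lemma det2_swap (u v : Fin 2 → ℝ) : det2 u v = - det2 v u := by
  rw [det2_eq, det2_eq]; ring

lemma cramer2 (u v w : Fin 2 → ℝ) (i : Fin 2) :
    det2 w v * u i + det2 u w * v i = det2 u v * w i := by
  fin_cases i <;> · simp [det2_eq]; ring

lemma key (u0 u1 uk v0 v1 vk : Fin 2 → ℝ) (s t c : ℝ)
    (hD' : det2 v0 v1 ≠ 0)
    (h1 : s * det2 uk u1 * det2 v0 v1 = c * det2 vk v1)
    (h2 : t * det2 u0 uk * det2 v0 v1 = c * det2 v0 vk) :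
    (fun i => s * det2 uk u1 * v0 i + t * det2 u0 uk * v1 i) = c • vk := by
  funext i
  have hc := cramer2 v0 v1 vk i
  have : det2 v0 v1 * (s * det2 uk u1 * v0 i + t * det2 u0 uk * v1 i)
      = det2 v0 v1 * ((c • vk) i) := by
    simp only [Pi.smul_apply, smul_eq_mul]
    linear_combination v0 i * h1 + v1 i * h2 + c * hc
  exact mul_left_cancel₀ hD' this

theorem five_points_projectively_equivalent_iff_cross_ratios
    (p q : Fin 5 → Fin 2 → ℝ)
    (hp : ∀ i j, i ≠ j → det2 (p i) (p j) ≠ 0)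
    (hq : ∀ i j, i ≠ j → det2 (q i) (q j) ≠ 0) :
    (∃ H : Matrix (Fin 2) (Fin 2) ℝ, H.det ≠ 0 ∧
        ∀ i, Sim (H.mulVec (p i)) (q i))
    ↔
    (∀ i : Fin 5,
      det2 (p (i.succAbove 0)) (p (i.succAbove 2)) *
        det2 (p (i.succAbove 1)) (p (i.succAbove 3)) *
        det2 (q (i.succAbove 0)) (q (i.succAbove 3)) *
        det2 (q (i.succAbove 1)) (q (i.succAbove 2))
      = det2 (p (i.succAbove 0)) (p (i.succAbove 3)) *
          det2 (p (i.succAbove 1)) (p (i.succAbove 2)) *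
          det2 (q (i.succAbove 0)) (q (i.succAbove 2)) *
          det2 (q (i.succAbove 1)) (q (i.succAbove 3))) := by
  constructor
  · rintro ⟨H, hH, hsim⟩
    choose c hc hceq using hsim
    have hrel : ∀ i j, det2 (q i) (q j) = H.det * det2 (p i) (p j) / (c i * c j) := by
      intro i j
      have : c i * c j * det2 (q i) (q j) = H.det * det2 (p i) (p j) := by
        rw [← det2_smul_smul, ← hceq, ← hceq, det2_mulVec]
      field_simp [hc i, hc j] at this ⊢
      linarith [this]
    intro i
    rw [hrel (i.succAbove 0) (i.succAbove 3), hrel (i.succAbove 1) (i.succAbove 2),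
        hrel (i.succAbove 0) (i.succAbove 2), hrel (i.succAbove 1) (i.succAbove 3)]
    field_simp [hc (i.succAbove 0), hc (i.succAbove 1), hc (i.succAbove 2), hc (i.succAbove 3)]
  · intro hcr
    have hD : det2 (p 0) (p 1) ≠ 0 := hp 0 1 (by decide)
    have hD' : det2 (q 0) (q 1) ≠ 0 := hq 0 1 (by decide)
    have hA2 : det2 (p 2) (p 1) ≠ 0 := hp 2 1 (by decide)
    have hB2 : det2 (p 0) (p 2) ≠ 0 := hp 0 2 (by decide)
    have hA2' : det2 (q 2) (q 1) ≠ 0 := hq 2 1 (by decide)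
    have hB2' : det2 (q 0) (q 2) ≠ 0 := hq 0 2 (by decide)
    obtain ⟨s, hsdef⟩ : ∃ s : ℝ, s = det2 (q 2) (q 1) / det2 (p 2) (p 1) := ⟨_, rfl⟩
    obtain ⟨t, htdef⟩ : ∃ t : ℝ, t = det2 (q 0) (q 2) / det2 (p 0) (p 2) := ⟨_, rfl⟩
    have hs : s ≠ 0 := by rw [hsdef]; exact div_ne_zero hA2' hA2
    have ht : t ≠ 0 := by rw [htdef]; exact div_ne_zero hB2' hB2
    refine ⟨Matrix.of
      ![![s * q 0 0 * p 1 1 + t * q 1 0 * (-(p 0 1)),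
         s * q 0 0 * (-(p 1 0)) + t * q 1 0 * p 0 0],
        ![s * q 0 1 * p 1 1 + t * q 1 1 * (-(p 0 1)),
         s * q 0 1 * (-(p 1 0)) + t * q 1 1 * p 0 0]], ?_, ?_⟩
    · have hdet : (Matrix.of
      ![![s * q 0 0 * p 1 1 + t * q 1 0 * (-(p 0 1)),
         s * q 0 0 * (-(p 1 0)) + t * q 1 0 * p 0 0],
        ![s * q 0 1 * p 1 1 + t * q 1 1 * (-(p 0 1)),
         s * q 0 1 * (-(p 1 0)) + t * q 1 1 * p 0 0]]).det
          = s * t * det2 (q 0) (q 1) * det2 (p 0) (p 1) := by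
        simp [Matrix.det_fin_two, det2_eq]; ring
      rw [hdet]
      exact mul_ne_zero (mul_ne_zero (mul_ne_zero hs ht) hD') hD
    · have hmul : ∀ x : Fin 2 → ℝ,
        (Matrix.of
          ![![s * q 0 0 * p 1 1 + t * q 1 0 * (-(p 0 1)),
             s * q 0 0 * (-(p 1 0)) + t * q 1 0 * p 0 0],
            ![s * q 0 1 * p 1 1 + t * q 1 1 * (-(p 0 1)),
             s * q 0 1 * (-(p 1 0)) + t * q 1 1 * p 0 0]]).mulVec x
          = fun i => s * det2 x (p 1) * q 0 i + t * det2 (p 0) x * q 1 i := by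
        intro x; funext i
        fin_cases i <;>
          · simp [Matrix.mulVec, dotProduct, Fin.sum_univ_two, det2_eq]; ring
      intro i
      rw [hmul]
      fin_cases i
      · refine ⟨s * det2 (p 0) (p 1), mul_ne_zero hs hD, ?_⟩
        funext j
        show s * det2 (p 0) (p 1) * q 0 j + t * det2 (p 0) (p 0) * q 1 j
            = (s * det2 (p 0) (p 1)) * q 0 j
        rw [det2_eq (p 0) (p 0)]; ring
      · refine ⟨t * det2 (p 0) (p 1), mul_ne_zero ht hD, ?_⟩
        funext j
        show s * det2 (p 1) (p 1) * q 0 j + t * det2 (p 0) (p 1) * q 1 j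
            = (t * det2 (p 0) (p 1)) * q 1 j
        rw [det2_eq (p 1) (p 1)]; ring
      · -- k = 2
        refine ⟨det2 (q 0) (q 1), hD',
          key (p 0) (p 1) (p 2) (q 0) (q 1) (q 2) s t _ hD' ?_ ?_⟩
        · rw [hsdef]; field_simp
        · rw [htdef]; field_simp
      · -- k = 3, uses hypothesis at i = 4
        have h4 := hcr 4
        rw [show (4 : Fin 5).succAbove 0 = 0 from by decide,
            show (4 : Fin 5).succAbove 1 = 1 from by decide,
            show (4 : Fin 5).succAbove 2 = 2 from by decide,
            show (4 : Fin 5).succAbove 3 = 3 from by decide] at h4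
        refine ⟨s * det2 (p 3) (p 1) * det2 (q 0) (q 1) / det2 (q 3) (q 1),
          div_ne_zero (mul_ne_zero (mul_ne_zero hs (hp 3 1 (by decide))) hD')
            (hq 3 1 (by decide)),
          key (p 0) (p 1) (p 3) (q 0) (q 1) (q 3) s t _ hD' ?_ ?_⟩
        · rw [div_mul_cancel₀ _ (hq 3 1 (by decide))]
        · rw [hsdef, htdef]
          field_simp
          rw [eq_div_iff (hq 3 1 (by decide))]
          rw [det2_swap (p 2) (p 1), det2_swap (q 3) (q 1), det2_swap (q 2) (q 1),
              det2_swap (p 3) (p 1)]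
          linear_combination (-1 : ℝ) * h4
      · -- k = 4, uses hypothesis at i = 3
        have h3 := hcr 3
        rw [show (3 : Fin 5).succAbove 0 = 0 from by decide,
            show (3 : Fin 5).succAbove 1 = 1 from by decide,
            show (3 : Fin 5).succAbove 2 = 2 from by decide,
            show (3 : Fin 5).succAbove 3 = 4 from by decide] at h3
        refine ⟨s * det2 (p 4) (p 1) * det2 (q 0) (q 1) / det2 (q 4) (q 1),
          div_ne_zero (mul_ne_zero (mul_ne_zero hs (hp 4 1 (by decide))) hD')
            (hq 4 1 (by decide)),
          key (p 0) (p 1) (p 4) (q 0) (q 1) (q 4) s t _ hD' ?_ ?_⟩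
        · rw [div_mul_cancel₀ _ (hq 4 1 (by decide))]
        · rw [hsdef, htdef]
          field_simp
          rw [eq_div_iff (hq 4 1 (by decide))]
          rw [det2_swap (p 2) (p 1), det2_swap (q 4) (q 1), det2_swap (q 2) (q 1),
              det2_swap (p 4) (p 1)]
          linear_combination (-1 : ℝ) * h3
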